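/- arXiv:2012.03844 — 2 statements merged into one kernel-verified Lean document; each statement's English description precedes it below -/
import Mathlib

section
/- Let F : ℝⁿ → ℝ be L-smooth and μ-strongly convex, C nonempty closed convex, 0 < α ≤ 1/L, and let x* = argmin_{x∈C} F(x). With R(x) = (x − Q(x))/α the reduced gradient of the projected gradient map, for all x ∈ C: (μ/2)‖x − x*‖² + (α/2)‖R(x)‖² ≤ ⟨R(x), x − x*⟩. -/
open scoped RealInnerProductSpace


theorem descent_aux {E : Type*} [NormedAddCommGroup E] [InnerProductSpace ℝ E] [CompleteSpace E]
    (F : E → ℝ) (hF_diff : ContDiff ℝ 1 F) (L : ℝ) (hL : 0 < L)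
    (hsm : ∀ x y, ‖gradient F x - gradient F y‖ ≤ L * ‖x - y‖) :
    ∀ x y, F y ≤ F x + ⟪gradient F x, y - x⟫ + L / 2 * ‖y - x‖ ^ 2 := by
  intro x y
  have hdiff : Differentiable ℝ F := hF_diff.differentiable one_ne_zero
  set v := y - x with hv
  have hgcont : Continuous (gradient F) := by
    apply (LipschitzWith.of_dist_le_mul (K := Real.toNNReal L) ?_).continuous
    intro a b
    simp only [dist_eq_norm, Real.coe_toNNReal _ hL.le]
    exact hsm a b
  have hcurve : ∀ t : ℝ, HasDerivAt (fun t : ℝ => x + t • v) v t := by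
    intro t
    simpa using ((hasDerivAt_id t).smul_const v).const_add x
  have hg : ∀ t : ℝ, HasDerivAt (fun t : ℝ => F (x + t • v))
      ⟪gradient F (x + t • v), v⟫ t := by
    intro t
    have h1 := (hdiff (x + t • v)).hasGradientAt.hasFDerivAt
    have := h1.comp_hasDerivAt t (hcurve t)
    have h3 : HasDerivAt (fun t : ℝ => F (x + t • v))
        ((InnerProductSpace.toDual ℝ E (gradient F (x + t • v))) v) t := this
    rwa [InnerProductSpace.toDual_apply_apply] at h3
  have hφcont : Continuous (fun t : ℝ => ⟪gradient F (x + t • v), v⟫) := by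
    exact (hgcont.comp (by continuity)).inner continuous_const
  have hFTC : F y - F x = ∫ t in (0:ℝ)..1, ⟪gradient F (x + t • v), v⟫ := by
    have := intervalIntegral.integral_eq_sub_of_hasDerivAt
      (f := fun t : ℝ => F (x + t • v)) (fun t _ => hg t)
      (hφcont.intervalIntegrable 0 1)
    simp only [one_smul, zero_smul, add_zero, hv] at this
    rw [this]
    congr 1 <;> simp [hv]
  have hbound : ∫ t in (0:ℝ)..1, ⟪gradient F (x + t • v), v⟫ ≤
      ∫ t in (0:ℝ)..1, (⟪gradient F x, v⟫ + L * ‖v‖ ^ 2 * t) := by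
    apply intervalIntegral.integral_mono_on zero_le_one
      (hφcont.intervalIntegrable 0 1)
      (Continuous.intervalIntegrable (by continuity) 0 1)
    intro t ht
    have ht0 : 0 ≤ t := ht.1
    have h1 : ⟪gradient F (x + t • v), v⟫ - ⟪gradient F x, v⟫
        = ⟪gradient F (x + t • v) - gradient F x, v⟫ := by
      rw [inner_sub_left]
    have h2 : ⟪gradient F (x + t • v) - gradient F x, v⟫ ≤
        ‖gradient F (x + t • v) - gradient F x‖ * ‖v‖ := real_inner_le_norm _ _
    have h3 : ‖gradient F (x + t • v) - gradient F x‖ ≤ L * ‖t • v‖ := by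
      simpa using hsm (x + t • v) x
    have h4 : ‖t • v‖ = t * ‖v‖ := by
      rw [norm_smul, Real.norm_eq_abs, abs_of_nonneg ht0]
    rw [h4] at h3
    nlinarith [norm_nonneg v, mul_le_mul_of_nonneg_right h3 (norm_nonneg v)]
  have hrhs : ∫ t in (0:ℝ)..1, (⟪gradient F x, v⟫ + L * ‖v‖ ^ 2 * t)
      = ⟪gradient F x, v⟫ + L / 2 * ‖v‖ ^ 2 := by
    rw [intervalIntegral.integral_add intervalIntegrable_const
      (Continuous.intervalIntegrable (by continuity) 0 1),
      intervalIntegral.integral_const_mul, integral_id]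
    simp
    ring
  linarith [hFTC ▸ (hrhs ▸ hbound)]


theorem scalar_aux (α L μ a b c p : ℝ) (hα : 0 < α) (hLα : L * α ≤ 1)
    (ha : 0 ≤ a) (hb : 0 ≤ b)
    (key : μ / 2 * a + p ≤ L / 2 * b) (h4 : -c + b - α * p ≤ 0) :
    μ / 2 * a + α / 2 * (α⁻¹ ^ 2 * b) ≤ α⁻¹ * c := by
  have h1 : b - α * p ≤ c := by linarith
  have h2 : α * p ≤ α * (L / 2 * b - μ / 2 * a) :=
    mul_le_mul_of_nonneg_left (by linarith) hα.le
  have h3 : b / 2 + α * (μ / 2 * a) ≤ c := by nlinarith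
  have h5 := mul_le_mul_of_nonneg_left h3 (inv_pos.2 hα).le
  have he : α / 2 * (α⁻¹ ^ 2 * b) = α⁻¹ * (b / 2) := by
    field_simp
  have h6 : α⁻¹ * (b / 2 + α * (μ / 2 * a)) = α⁻¹ * (b / 2) + μ / 2 * a := by
    field_simp
  linarith


set_option maxHeartbeats 1000000 in
/-- Strong-convexity identity for the reduced gradient: if `F` is `L`-smooth and
`μ`-strongly convex, `0 < α ≤ 1/L`, and `x*` minimizes `F` over the nonempty closed
convex set `C`, then for all `x ∈ C`,
`(μ/2)‖x − x*‖² + (α/2)‖R x‖² ≤ ⟪R x, x − x*⟫` where `R x = (x − P(x − α∇F x))/α`. -/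
theorem stmt_3 {n : ℕ} (F : EuclideanSpace ℝ (Fin n) → ℝ)
    (hF_diff : ContDiff ℝ 1 F)
    (L μ : ℝ) (hL : 0 < L) (hμ : 0 < μ)
    (hF_smooth : ∀ x y, ‖gradient F x - gradient F y‖ ≤ L * ‖x - y‖)
    (hF_sconv : ∀ x y, F x + ⟪gradient F x, y - x⟫ + μ / 2 * ‖y - x‖ ^ 2 ≤ F y)
    (C : Set (EuclideanSpace ℝ (Fin n)))
    (hC_ne : C.Nonempty) (hC_closed : IsClosed C) (hC_convex : Convex ℝ C)
    (P : EuclideanSpace ℝ (Fin n) → EuclideanSpace ℝ (Fin n))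
    (hP_mem : ∀ y, P y ∈ C)
    (hP_min : ∀ y, ∀ z ∈ C, ‖y - P y‖ ≤ ‖y - z‖)
    (α : ℝ) (hα : 0 < α) (hαL : α ≤ 1 / L)
    (xs : EuclideanSpace ℝ (Fin n)) (hxs_mem : xs ∈ C)
    (hxs_min : ∀ x ∈ C, F xs ≤ F x) :
    ∀ x ∈ C,
      μ / 2 * ‖x - xs‖ ^ 2 +
          α / 2 * ‖α⁻¹ • (x - P (x - α • gradient F x))‖ ^ 2 ≤
        ⟪α⁻¹ • (x - P (x - α • gradient F x)), x - xs⟫ := by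
  intro x hx
  set g := gradient F x with hg
  set y := x - α • g with hy
  set x₁ := P y with hx₁
  -- projection variational inequality
  have hVI : ∀ z ∈ C, ⟪y - x₁, z - x₁⟫ ≤ 0 := by
    have hinf : ‖y - x₁‖ = ⨅ w : C, ‖y - w‖ := by
      haveI : Nonempty C := ⟨⟨x₁, hP_mem y⟩⟩
      have hbdd : BddBelow (Set.range fun w : C => ‖y - (w : EuclideanSpace ℝ (Fin n))‖) := by
        refine ⟨0, ?_⟩
        rintro r ⟨w, rfl⟩
        exact norm_nonneg _
      apply le_antisymm
      · exact le_ciInf fun w => hP_min y w w.2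
      · exact ciInf_le hbdd ⟨x₁, hP_mem y⟩
    exact (norm_eq_iInf_iff_real_inner_le_zero hC_convex (hP_mem y)).1 hinf
  -- descent lemma
  have h1 : F x₁ ≤ F x + ⟪g, x₁ - x⟫ + L / 2 * ‖x₁ - x‖ ^ 2 :=
    descent_aux F hF_diff L hL hF_smooth x x₁
  have h2 : F x + ⟪g, xs - x⟫ + μ / 2 * ‖xs - x‖ ^ 2 ≤ F xs := hF_sconv x xs
  have h3 : F xs ≤ F x₁ := hxs_min x₁ (hP_mem y)
  have h4 : ⟪y - x₁, xs - x₁⟫ ≤ 0 := hVI xs hxs_mem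
  -- expand inner products into scalars
  have e1 : ⟪y - x₁, xs - x₁⟫ = ⟪x - x₁, xs - x₁⟫ - α * ⟪g, xs - x₁⟫ := by
    rw [hy]; rw [sub_right_comm, inner_sub_left, real_inner_smul_left]
  have e2 : ⟪g, xs - x₁⟫ = ⟪g, xs - x⟫ - ⟪g, x₁ - x⟫ := by
    rw [← inner_sub_right]; congr 1; abel
  have e3 : ⟪x - x₁, xs - x₁⟫ = ⟪x - x₁, xs - x⟫ + ‖x - x₁‖ ^ 2 := by
    rw [← real_inner_self_eq_norm_sq, ← inner_add_right]; congr 1; abel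
  have e4 : ⟪x - x₁, xs - x⟫ = - ⟪x - x₁, x - xs⟫ := by
    rw [← inner_neg_right]; congr 1; abel
  have e5 : ‖xs - x‖ = ‖x - xs‖ := norm_sub_rev _ _
  have e6 : ‖x₁ - x‖ = ‖x - x₁‖ := norm_sub_rev _ _
  -- goal rewriting
  have e7 : ‖α⁻¹ • (x - x₁)‖ ^ 2 = α⁻¹ ^ 2 * ‖x - x₁‖ ^ 2 := by
    rw [norm_smul, Real.norm_eq_abs, abs_of_pos (inv_pos.2 hα)]; ring
  have e8 : ⟪α⁻¹ • (x - x₁), x - xs⟫ = α⁻¹ * ⟪x - x₁, x - xs⟫ := real_inner_smul_left _ _ _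
  rw [e7, e8]
  -- scalar inequality
  have hLα : L * α ≤ 1 := by
    rw [le_div_iff₀ hL] at hαL; linarith
  rw [e1, e2, e3, e4] at h4
  rw [e5] at h2
  rw [e6] at h1
  have key : μ / 2 * ‖x - xs‖ ^ 2 + (⟪g, xs - x⟫ - ⟪g, x₁ - x⟫) ≤ L / 2 * ‖x - x₁‖ ^ 2 := by
    linarith
  exact scalar_aux α L μ (‖x - xs‖ ^ 2) (‖x - x₁‖ ^ 2) (⟪x - x₁, x - xs⟫)
    (⟪g, xs - x⟫ - ⟪g, x₁ - x⟫) hα hLα (sq_nonneg _) (sq_nonneg _) key (by linarith)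
end

section
/- Let F be μ-strongly convex and L-smooth on ℝⁿ, C nonempty closed convex, 0 < α < 1/L, x* = argmin_{x∈C} F(x), and R(x) = (x − P(x − α∇F(x)))/α. Then for all x ∈ C, the inequalities (1 − √(1−αμ))‖x−x*‖ ≤ α‖R(x)‖ ≤ (1 + √(1−αμ))‖x−x*‖ hold. -/
open scoped RealInnerProductSpace

/-- Descent lemma. -/
lemma descent_lemma {n : ℕ} (F : EuclideanSpace ℝ (Fin n) → ℝ)
    (hF_diff : ContDiff ℝ 1 F) (L : ℝ)
    (hsm : ∀ x y, ‖gradient F x - gradient F y‖ ≤ L * ‖x - y‖) :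
    ∀ x y, F y ≤ F x + ⟪gradient F x, y - x⟫ + L / 2 * ‖y - x‖ ^ 2 := by
  intro x y
  set v := y - x with hv
  have hdiff : Differentiable ℝ F := hF_diff.differentiable one_ne_zero
  have hfd : ∀ p, HasFDerivAt F ((InnerProductSpace.toDual ℝ _) (gradient F p)) p :=
    fun p => (hdiff p).hasGradientAt.hasFDerivAt
  set φ : ℝ → ℝ := fun t => F (x + t • v) - t * ⟪gradient F x, v⟫ - L / 2 * t ^ 2 * ‖v‖ ^ 2
    with hφdef
  have hd : ∀ t : ℝ, HasDerivAt φ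
      (⟪gradient F (x + t • v), v⟫ - ⟪gradient F x, v⟫ - L * t * ‖v‖ ^ 2) t := by
    intro t
    have hline : HasDerivAt (fun t : ℝ => x + t • v) v t := by
      simpa using ((hasDerivAt_id t).smul_const v).const_add x
    have h1 : HasDerivAt (fun t : ℝ => F (x + t • v)) (⟪gradient F (x + t • v), v⟫) t := by
      have := (hfd (x + t • v)).comp_hasDerivAt t hline
      rw [InnerProductSpace.toDual_apply_apply] at this; exact this
    have h2 : HasDerivAt (fun t : ℝ => t * ⟪gradient F x, v⟫) (⟪gradient F x, v⟫) t := by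
      simpa using (hasDerivAt_id t).mul_const (⟪gradient F x, v⟫)
    have h3 : HasDerivAt (fun t : ℝ => L / 2 * t ^ 2 * ‖v‖ ^ 2) (L * t * ‖v‖ ^ 2) t := by
      have := ((hasDerivAt_pow 2 t).const_mul (L / 2)).mul_const (‖v‖ ^ 2)
      refine this.congr_deriv ?_
      rw [show (2:ℕ) - 1 = 1 from rfl]; push_cast
      ring
    exact (h1.sub h2).sub h3
  have hmono : AntitoneOn φ (Set.Icc (0 : ℝ) 1) := by
    apply antitoneOn_of_deriv_nonpos (convex_Icc 0 1)
    · exact fun t _ => (hd t).continuousAt.continuousWithinAt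
    · exact fun t _ => (hd t).differentiableAt.differentiableWithinAt
    · intro t ht
      rw [interior_Icc] at ht
      rw [(hd t).deriv]
      have hcs : ⟪gradient F (x + t • v) - gradient F x, v⟫
          ≤ ‖gradient F (x + t • v) - gradient F x‖ * ‖v‖ := real_inner_le_norm _ _
      have hl := hsm (x + t • v) x
      have hn : ‖x + t • v - x‖ = t * ‖v‖ := by
        rw [add_sub_cancel_left, norm_smul, Real.norm_eq_abs, abs_of_pos ht.1]
      rw [hn] at hl
      rw [inner_sub_left] at hcs
      nlinarith [norm_nonneg v, norm_nonneg (gradient F (x + t • v) - gradient F x), ht.1.le]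
  have h01 := hmono (Set.left_mem_Icc.mpr zero_le_one) (Set.right_mem_Icc.mpr zero_le_one)
    zero_le_one
  have h0 : φ 0 = F x := by simp [hφdef]
  have h1 : φ 1 = F y - ⟪gradient F x, v⟫ - L / 2 * ‖v‖ ^ 2 := by
    simp [hφdef, hv]
  rw [h0, h1] at h01
  linarith

set_option maxHeartbeats 1000000 in
/-- Two-sided bound between the reduced gradient and the distance to the constrained
minimizer under `μ`-strong convexity and `L`-smoothness, with `0 < α < 1/L`:
`(1 − √(1−αμ))‖x−x*‖ ≤ α‖R x‖ ≤ (1 + √(1−αμ))‖x−x*‖` for all `x ∈ C`. -/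
theorem stmt_5 {n : ℕ} (F : EuclideanSpace ℝ (Fin n) → ℝ)
    (hF_diff : ContDiff ℝ 1 F)
    (L μ : ℝ) (hL : 0 < L) (hμ : 0 < μ)
    (hF_smooth : ∀ x y, ‖gradient F x - gradient F y‖ ≤ L * ‖x - y‖)
    (hF_sconv : ∀ x y, F x + ⟪gradient F x, y - x⟫ + μ / 2 * ‖y - x‖ ^ 2 ≤ F y)
    (C : Set (EuclideanSpace ℝ (Fin n)))
    (hC_ne : C.Nonempty) (hC_closed : IsClosed C) (hC_convex : Convex ℝ C)
    (P : EuclideanSpace ℝ (Fin n) → EuclideanSpace ℝ (Fin n))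
    (hP_mem : ∀ y, P y ∈ C)
    (hP_min : ∀ y, ∀ z ∈ C, ‖y - P y‖ ≤ ‖y - z‖)
    (α : ℝ) (hα : 0 < α) (hαL : α < 1 / L)
    (xs : EuclideanSpace ℝ (Fin n)) (hxs_mem : xs ∈ C)
    (hxs_min : ∀ x ∈ C, F xs ≤ F x) :
    ∀ x ∈ C,
      (1 - Real.sqrt (1 - α * μ)) * ‖x - xs‖ ≤
          α * ‖α⁻¹ • (x - P (x - α • gradient F x))‖ ∧
        α * ‖α⁻¹ • (x - P (x - α • gradient F x))‖ ≤
          (1 + Real.sqrt (1 - α * μ)) * ‖x - xs‖ := by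
  have hdesc := descent_lemma F hF_diff L hF_smooth
  have hVI : ∀ u, ∀ z ∈ C, ⟪u - P u, z - P u⟫ ≤ 0 := by
    intro u
    haveI : Nonempty C := hC_ne.to_subtype
    have hbdd : BddBelow (Set.range fun w : C => ‖u - (w : EuclideanSpace ℝ (Fin n))‖) := by
      refine ⟨0, ?_⟩
      rintro r ⟨w, rfl⟩
      exact norm_nonneg _
    have hle : (⨅ w : C, ‖u - (w : EuclideanSpace ℝ (Fin n))‖) ≤ ‖u - P u‖ :=
      ciInf_le hbdd ⟨P u, hP_mem u⟩
    have hge : ‖u - P u‖ ≤ ⨅ w : C, ‖u - (w : EuclideanSpace ℝ (Fin n))‖ :=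
      le_ciInf fun w => hP_min u w w.2
    exact (norm_eq_iInf_iff_real_inner_le_zero hC_convex (hP_mem u)).mp (le_antisymm hge hle)
  intro x hx
  set g := gradient F x with hg
  set y := P (x - α • g) with hy
  set v := x - y with hv
  have hαr : α * ‖α⁻¹ • v‖ = ‖v‖ := by
    rw [norm_smul, Real.norm_eq_abs, abs_of_pos (inv_pos.mpr hα)]
    field_simp
  set t := ‖v‖ with ht
  set d := ‖x - xs‖ with hd
  have ht0 : 0 ≤ t := norm_nonneg _
  have hd0 : 0 ≤ d := norm_nonneg _
  have hαL' : α * L < 1 := by rwa [lt_div_iff₀ hL] at hαL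
  -- descent lemma at x, y
  have h1 : F y ≤ F x - ⟪g, v⟫ + L / 2 * t ^ 2 := by
    have := hdesc x y
    have e1 : y - x = -v := by rw [hv]; abel
    rw [e1, inner_neg_right, norm_neg] at this
    linarith [this]
  -- strong convexity at x toward xs
  have h2 : F x + ⟪g, xs - x⟫ + μ / 2 * d ^ 2 ≤ F xs := by
    have := hF_sconv x xs
    rwa [norm_sub_rev] at this
  -- optimality of xs
  have h4 : F xs ≤ F y := hxs_min y (hP_mem _)
  -- variational inequality
  have h3 : -⟪v, x - xs⟫ + t ^ 2 - (α * ⟪g, xs - x⟫ + α * ⟪g, v⟫) ≤ 0 := by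
    have h := hVI (x - α • g) xs hxs_mem
    have e1 : x - α • g - y = v - α • g := by rw [hv]; abel
    have e2 : xs - y = (xs - x) + v := by rw [hv]; abel
    rw [← hy, e1, e2, inner_sub_left, inner_add_right, inner_add_right,
      real_inner_smul_left, real_inner_smul_left, real_inner_self_eq_norm_sq] at h
    have e3 : ⟪v, xs - x⟫ = -⟪v, x - xs⟫ := by
      rw [show xs - x = -(x - xs) by abel, inner_neg_right]
    rw [e3] at h
    linarith [h]
  have h5 : ⟪v, x - xs⟫ ≤ t * d := real_inner_le_norm v (x - xs)
  -- combine
  have hab : ⟪g, xs - x⟫ + ⟪g, v⟫ ≤ L / 2 * t ^ 2 - μ / 2 * d ^ 2 := by linarith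
  have h7 : α * (⟪g, xs - x⟫ + ⟪g, v⟫) ≤ α * (L / 2 * t ^ 2 - μ / 2 * d ^ 2) :=
    mul_le_mul_of_nonneg_left hab hα.le
  have h8 : α * L * t ^ 2 ≤ t ^ 2 := by nlinarith [sq_nonneg t]
  have hkey : α * μ * d ^ 2 + t ^ 2 ≤ 2 * t * d := by nlinarith
  rw [hαr]
  by_cases hdz : d = 0
  · have htz : t = 0 := by
      have h := hkey
      rw [hdz] at h
      have h2 : t ^ 2 ≤ 0 := by nlinarith
      exact pow_eq_zero_iff two_ne_zero |>.mp (le_antisymm h2 (sq_nonneg t))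
    rw [hdz, htz]
    norm_num
  · have hdpos : 0 < d := lt_of_le_of_ne hd0 (Ne.symm hdz)
    have hαμ : α * μ ≤ 1 := by nlinarith [sq_nonneg (t - d), mul_pos hdpos hdpos]
    set s := Real.sqrt (1 - α * μ) with hs
    have hs2 : s ^ 2 = 1 - α * μ := Real.sq_sqrt (by linarith)
    have hs0 : 0 ≤ s := Real.sqrt_nonneg _
    have hsq : (t - d) ^ 2 ≤ (s * d) ^ 2 := by nlinarith
    have habs : |t - d| ≤ s * d := by
      have h := Real.sqrt_le_sqrt hsq
      rwa [Real.sqrt_sq_eq_abs, Real.sqrt_sq (mul_nonneg hs0 hd0)] at h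
    obtain ⟨hlo, hhi⟩ := abs_le.mp habs
    constructor <;> nlinarith
end
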